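/- Let f, g₁, g₂ be continuous ρ-periodic functions with f ≥ 0, g₁(t) ≥ g₂(t) for all t, and ∫₀^ρ g₂(s) ds > 0. If w₁ and w₂ are the unique ρ-periodic solutions of w' = f(t) - g₁(t)w and w' = f(t) - g₂(t)w respectively, then w₁(t) ≤ w₂(t) for all t ∈ ℝ₊. -/

import Mathlib

lemma periodic_gronwall_nonneg (ρ : ℝ) (hρ : 0 < ρ) (g v v' : ℝ → ℝ)
    (hg : Continuous g) (hgp : Function.Periodic g ρ)
    (hgint : 0 < ∫ s in (0:ℝ)..ρ, g s)
    (hv : ∀ t, HasDerivAt v (v' t) t)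
    (hineq : ∀ t, -(g t * v t) ≤ v' t)
    (hvp : Function.Periodic v ρ) : ∀ t, 0 ≤ v t := by
  set H : ℝ → ℝ := fun t => ∫ s in (0:ℝ)..t, g s with hH
  have hHd : ∀ t, HasDerivAt H (g t) t := fun t =>
    intervalIntegral.integral_hasDerivAt_right
      (hg.intervalIntegrable 0 t)
      hg.aestronglyMeasurable.stronglyMeasurableAtFilter hg.continuousAt
  set F : ℝ → ℝ := fun t => Real.exp (H t) * v t with hF
  have hFd : ∀ t, HasDerivAt F (Real.exp (H t) * (g t * v t + v' t)) t := by
    intro t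
    have : HasDerivAt F (Real.exp (H t) * g t * v t + Real.exp (H t) * v' t) t :=
      ((hHd t).exp.mul (hv t))
    convert this using 1; ring
  have hFmono : Monotone F := by
    apply monotone_of_deriv_nonneg
    · exact fun t => ((hFd t).differentiableAt)
    · intro t
      rw [(hFd t).deriv]
      have h1 : 0 ≤ g t * v t + v' t := by linarith [hineq t]
      positivity
  intro t
  have hshift : H (t + ρ) = H t + ∫ s in (0:ℝ)..ρ, g s := by
    have h1 : H (t + ρ) = H t + ∫ s in t..(t + ρ), g s := by
      rw [hH]
      simp only []
      rw [← intervalIntegral.integral_add_adjacent_intervals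
        (hg.intervalIntegrable 0 t) (hg.intervalIntegrable t (t + ρ))]
    rw [h1, hgp.intervalIntegral_add_eq t 0, zero_add]
  have hmono := hFmono (le_add_of_nonneg_right hρ.le : t ≤ t + ρ)
  rw [hF] at hmono
  simp only [hvp t] at hmono
  have hexp : Real.exp (H t) < Real.exp (H (t + ρ)) := by
    rw [hshift]; exact Real.exp_lt_exp.2 (by linarith)
  nlinarith [hmono, hexp]

/-- Comparison of ρ-periodic solutions of w' = f - g₁·w and w' = f - g₂·w when g₁ ≥ g₂. -/
theorem periodic_solution_linear_ode_comparison
    (ρ : ℝ) (hρ : 0 < ρ) (f g₁ g₂ : ℝ → ℝ)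
    (hf : Continuous f) (hg₁ : Continuous g₁) (hg₂ : Continuous g₂)
    (hfp : Function.Periodic f ρ) (hg₁p : Function.Periodic g₁ ρ)
    (hg₂p : Function.Periodic g₂ ρ)
    (hfnn : ∀ t, 0 ≤ f t)
    (hgle : ∀ t, g₂ t ≤ g₁ t)
    (hg₂int : 0 < ∫ s in (0:ℝ)..ρ, g₂ s)
    (w₁ w₂ : ℝ → ℝ)
    (hw₁ : ∀ t, HasDerivAt w₁ (f t - g₁ t * w₁ t) t)
    (hw₂ : ∀ t, HasDerivAt w₂ (f t - g₂ t * w₂ t) t)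
    (hp₁ : Function.Periodic w₁ ρ) (hp₂ : Function.Periodic w₂ ρ) :
    ∀ t, 0 ≤ t → w₁ t ≤ w₂ t := by
  have hg₁int : 0 < ∫ s in (0:ℝ)..ρ, g₁ s := by
    refine lt_of_lt_of_le hg₂int ?_
    exact intervalIntegral.integral_mono_on hρ.le (hg₂.intervalIntegrable 0 ρ)
      (hg₁.intervalIntegrable 0 ρ) (fun x _ => hgle x)
  have hw₁nn : ∀ t, 0 ≤ w₁ t := by
    apply periodic_gronwall_nonneg ρ hρ g₁ w₁ (fun t => f t - g₁ t * w₁ t)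
      hg₁ hg₁p hg₁int hw₁ _ hp₁
    intro t; linarith [hfnn t]
  have key : ∀ t, 0 ≤ w₂ t - w₁ t := by
    apply periodic_gronwall_nonneg ρ hρ g₂ (fun t => w₂ t - w₁ t)
      (fun t => (f t - g₂ t * w₂ t) - (f t - g₁ t * w₁ t))
      hg₂ hg₂p hg₂int (fun t => (hw₂ t).sub (hw₁ t)) _ (fun t => by simp [hp₂ t, hp₁ t])
    intro t
    have := mul_le_mul_of_nonneg_right (hgle t) (hw₁nn t)
    ring_nf
    nlinarith
  intro t _
  linarith [key t]
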